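/- arXiv:2306.02219 — 4 statements merged into one kernel-verified Lean document; each statement's English description precedes it below -/
import Mathlib

section
/- Let n ≥ 5 and let c : I_n → C_n be the closed walk based at 0 that goes once around the cycle graph, i.e., c(i) = i mod n for i = 0, 1, ..., n (so c has winding number 1). Then c is not based A-homotopic to the constant walk at 0 of length n. -/
/-- The path graph `I_N` on vertices `{0, 1, …, N}`, with `i` adjacent to `j` iff `|i - j| = 1`. -/
def pathG (N : ℕ) : SimpleGraph (Fin (N + 1)) where
  Adj i j := (i : ℕ) + 1 = (j : ℕ) ∨ (j : ℕ) + 1 = (i : ℕ)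
  symm := ⟨fun i j h => h.symm⟩
  loopless := ⟨fun i h => by rcases h with h | h <;> omega⟩

/-- The cycle graph `C_n` on vertices `ZMod n`, with `i` adjacent to `j` iff `j = i + 1` or
`j = i - 1` (for `n ≥ 3`). -/
def cycleG (n : ℕ) : SimpleGraph (ZMod n) :=
  SimpleGraph.fromRel (fun i j => j = i + 1)

/-- A graph map `f : G → H`: for adjacent `u v` in `G`, either `f u = f v` or
`f u, f v` are adjacent in `H`. -/
def IsGraphMap {V W : Type*} (G : SimpleGraph V) (H : SimpleGraph W) (f : V → W) : Prop :=
  ∀ ⦃u v⦄, G.Adj u v → f u = f v ∨ H.Adj (f u) (f v)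

/-- Walks `c, c' : I_N → G` (with matching endpoints) are based A-homotopic if there are `k` and a
graph map `α : I_N □ I_k → G` with `α (i, 0) = c i`, `α (i, k) = c' i`, `α (0, j) = c 0` and
`α (N, j) = c N`. -/
def BasedAHomotopic {V : Type*} (G : SimpleGraph V) (N : ℕ) (c c' : Fin (N + 1) → V) : Prop :=
  ∃ (k : ℕ) (α : Fin (N + 1) × Fin (k + 1) → V),
    IsGraphMap ((pathG N).boxProd (pathG k)) G α ∧
    (∀ i, α (i, 0) = c i) ∧ (∀ i, α (i, Fin.last k) = c' i) ∧
    (∀ j, α (0, j) = c 0) ∧ (∀ j, α (Fin.last N, j) = c (Fin.last N))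

/-- degree of a small step in `ZMod n`. -/
def degZ (n : ℕ) (a b : ZMod n) : ℤ := if b = a then 0 else if b = a + 1 then 1 else -1

/-- small step predicate -/
def Sm (n : ℕ) (a b : ZMod n) : Prop := b = a ∨ b = a + 1 ∨ b = a - 1

lemma degZ_cast {n : ℕ} {a b : ZMod n} (h : Sm n a b) :
    ((degZ n a b : ℤ) : ZMod n) = b - a := by
  unfold degZ
  split_ifs with h1 h2
  · simp [h1]
  · simp [h2]
  · rcases h with h | h | h
    · exact absurd h h1
    · exact absurd h h2
    · subst h; push_cast; ring

lemma abs_degZ_le (n : ℕ) (a b : ZMod n) : |degZ n a b| ≤ 1 := by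
  unfold degZ; split_ifs <;> norm_num

lemma degZ_refl (n : ℕ) (a : ZMod n) : degZ n a a = 0 := by simp [degZ]

lemma square {n : ℕ} (hn : 5 ≤ n) {a b c d : ZMod n}
    (hab : Sm n a b) (hbd : Sm n b d) (hac : Sm n a c) (hcd : Sm n c d) :
    degZ n a b + degZ n b d = degZ n a c + degZ n c d := by
  set D : ℤ := degZ n a b + degZ n b d - (degZ n a c + degZ n c d) with hD
  have h1 : ((D : ℤ) : ZMod n) = 0 := by
    rw [hD]; push_cast
    rw [degZ_cast hab, degZ_cast hbd, degZ_cast hac, degZ_cast hcd]; ring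
  have h2 : (n : ℤ) ∣ D := (ZMod.intCast_zmod_eq_zero_iff_dvd _ n).mp h1
  have hb : |D| ≤ 4 := by
    have := abs_degZ_le n a b; have := abs_degZ_le n b d
    have := abs_degZ_le n a c; have := abs_degZ_le n c d
    rw [hD]
    calc |degZ n a b + degZ n b d - (degZ n a c + degZ n c d)|
        ≤ |degZ n a b| + |degZ n b d| + (|degZ n a c| + |degZ n c d|) := by
          apply (abs_sub _ _).trans; gcongr <;> exact abs_add_le _ _
      _ ≤ 4 := by omega
  have : D = 0 := by
    rcases h2 with ⟨t, ht⟩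
    rcases eq_or_ne t 0 with rfl | htne
    · simp [ht]
    · exfalso
      have h1t : (1 : ℤ) ≤ |t| := Int.one_le_abs htne
      have : |D| = (n : ℤ) * |t| := by rw [ht, abs_mul, abs_of_nonneg]; positivity
      nlinarith
  linarith [hD ▸ this]

/-- For `n ≥ 5`, the closed walk `c : I_n → C_n` given by `c i = i mod n` (going once around the
cycle, winding number `1`) is not based A-homotopic to the constant walk at `0` of length `n`. -/
theorem once_around_not_based_homotopic_to_constant (n : ℕ) (hn : 5 ≤ n) :
    ¬ BasedAHomotopic (cycleG n) n
      (fun i : Fin (n + 1) => ((i : ℕ) : ZMod n))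
      (fun _ : Fin (n + 1) => (0 : ZMod n)) := by
  rintro ⟨k, α, hmap, h0, hk, hl, hr⟩
  -- the grid as a function on naturals
  set A : ℕ → ℕ → ZMod n := fun i j => α (⟨min i n, by omega⟩, ⟨min j k, by omega⟩) with hA
  -- adjacency / smallness lemmas
  have adj_sm : ∀ u v : Fin (n+1) × Fin (k+1),
      ((pathG n).boxProd (pathG k)).Adj u v → Sm n (α u) (α v) := by
    intro u v huv
    rcases hmap huv with h | h
    · exact Or.inl h.symm
    · rcases h with ⟨hne, h | h⟩
      · exact Or.inr (Or.inl h)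
      · exact Or.inr (Or.inr (by rw [h]; ring))
  have hsmH : ∀ i j, i < n → j ≤ k → Sm n (A i j) (A (i+1) j) := by
    intro i j hi hj
    apply adj_sm
    refine Or.inl ⟨?_, rfl⟩
    refine Or.inl ?_; simp; omega
  have hsmV : ∀ i j, i ≤ n → j < k → Sm n (A i j) (A i (j+1)) := by
    intro i j hi hj
    apply adj_sm
    refine Or.inr ⟨?_, rfl⟩
    refine Or.inl ?_; simp; omega
  -- boundary values
  have hA0 : ∀ j, A 0 j = 0 := by
    intro j
    have := hl ⟨min j k, by omega⟩
    simpa [hA] using this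
  have hAn : ∀ j, A n j = 0 := by
    intro j
    have := hr ⟨min j k, by omega⟩
    simp [hA, Fin.last] at this ⊢
    simpa [ZMod.natCast_self] using this
  have hAbot : ∀ i, i ≤ n → A i 0 = (i : ZMod n) := by
    intro i hi
    have := h0 ⟨i, by omega⟩
    simpa [hA, Nat.min_eq_left hi] using this
  have hAtop : ∀ i, A i k = 0 := by
    intro i
    have := hk ⟨min i n, by omega⟩
    simpa [hA, Fin.last] using this
  -- winding number of each row
  set W : ℕ → ℤ := fun j => ∑ i ∈ Finset.range n, degZ n (A i j) (A (i+1) j) with hW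
  have hstep : ∀ j, j < k → W (j+1) = W j := by
    intro j hj
    have key : ∀ i ∈ Finset.range n,
        degZ n (A i (j+1)) (A (i+1) (j+1)) - degZ n (A i j) (A (i+1) j)
        = degZ n (A (i+1) j) (A (i+1) (j+1)) - degZ n (A i j) (A i (j+1)) := by
      intro i hi
      simp only [Finset.mem_range] at hi
      have := square hn (hsmH i j hi (le_of_lt hj)) (hsmV (i+1) j (by omega) hj)
        (hsmV i j (by omega) hj) (hsmH i (j+1) hi hj)
      linarith
    have : W (j+1) - W j = ∑ i ∈ Finset.range n,
        (degZ n (A (i+1) j) (A (i+1) (j+1)) - degZ n (A i j) (A i (j+1))) := by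
      simp only [hW]
      rw [← Finset.sum_sub_distrib]
      exact Finset.sum_congr rfl key
    rw [Finset.sum_range_sub (f := fun i => degZ n (A i j) (A i (j+1)))] at this
    rw [hA0, hA0, hAn, hAn, degZ_refl] at this
    linarith
  have hWconst : ∀ j, j ≤ k → W j = W 0 := by
    intro j
    induction j with
    | zero => intro _; rfl
    | succ m ih => intro hm; rw [hstep m (by omega), ih (by omega)]
  -- W 0 = n
  haveI : Fact (1 < n) := ⟨by omega⟩
  have hW0 : W 0 = n := by
    simp only [hW]
    have : ∀ i ∈ Finset.range n, degZ n (A i 0) (A (i+1) 0) = 1 := by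
      intro i hi
      simp only [Finset.mem_range] at hi
      rw [hAbot i (by omega), hAbot (i+1) (by omega)]
      have hcast : ((i+1 : ℕ) : ZMod n) = (i : ZMod n) + 1 := by push_cast; ring
      have hne : ((i+1 : ℕ) : ZMod n) ≠ (i : ZMod n) := by
        rw [hcast]
        intro h
        exact one_ne_zero (α := ZMod n) (by linear_combination h)
      simp [degZ, hne, hcast]
    rw [Finset.sum_congr rfl this]
    simp
  have hWk : W k = 0 := by
    simp only [hW]
    apply Finset.sum_eq_zero
    intro i _
    rw [hAtop, hAtop, degZ_refl]
  have := hWconst k le_rfl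
  rw [hW0, hWk] at this
  omega
end

section
/- Let n ≥ 3. Every closed walk c : I_N → C_n in the cycle graph C_n that is based at a vertex v and has fewer than n non-stationary steps (i.e., the number of indices i with c(i) ≠ c(i+1) is at most n − 1) is based A-homotopic, after padding to a common length, to the constant walk at v. -/
/-- Padding a walk `c : I_N → G` to length `N' ≥ N`: the walk `i ↦ c (min i N)`. -/
def padWalk {V : Type*} {N : ℕ} (N' : ℕ) (c : Fin (N + 1) → V) : Fin (N' + 1) → V :=
  fun i => c ⟨min (i : ℕ) N, by omega⟩

section ShortCycleAux

open Finset

/-- The integer increment of the walk `c` at step `m`. -/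
private def stepInc (n N : ℕ) (c : Fin (N + 1) → ZMod n) (m : ℕ) : ℤ :=
  if h : m < N then
    if c ⟨m + 1, by omega⟩ = c ⟨m, by omega⟩ + 1 then 1
    else if c ⟨m + 1, by omega⟩ = c ⟨m, by omega⟩ then 0 else -1
  else 0

/-- The integer lift of the walk `c`, as partial sums of increments. -/
private def liftW (n N : ℕ) (c : Fin (N + 1) → ZMod n) (m : ℕ) : ℤ :=
  ∑ j ∈ Finset.range m, stepInc n N c j

/-- Truncation of `x` towards `0` by `j`. -/
private def trunc (j x : ℤ) : ℤ := max (x - j) (min (x + j) 0)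

private lemma abs_stepInc (n N : ℕ) (c : Fin (N + 1) → ZMod n) (m : ℕ) :
    |stepInc n N c m| ≤ 1 := by
  unfold stepInc; split_ifs <;> simp

private lemma stepInc_eq_zero {n N : ℕ} {c : Fin (N + 1) → ZMod n}
    (hn1 : (1 : ZMod n) ≠ 0) (i : Fin N) (heq : c i.castSucc = c i.succ) :
    stepInc n N c i.val = 0 := by
  have e1 : (⟨i.val, by omega⟩ : Fin (N + 1)) = i.castSucc := rfl
  have e2 : (⟨i.val + 1, by omega⟩ : Fin (N + 1)) = i.succ := rfl
  unfold stepInc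
  rw [dif_pos i.isLt, e1, e2, ← heq]
  split_ifs with h1 h2
  · exact absurd ((left_eq_add).mp h1) hn1
  · rfl
  · exact absurd rfl h2

private lemma step_rel {n N : ℕ} {c : Fin (N + 1) → ZMod n}
    (hc : IsGraphMap (pathG N) (cycleG n) c) {m : ℕ} (hm : m < N) :
    c ⟨m + 1, by omega⟩ = c ⟨m, by omega⟩ + ((stepInc n N c m : ℤ) : ZMod n) := by
  unfold stepInc
  rw [dif_pos hm]
  split_ifs with h1 h2
  · rw [h1]; push_cast; ring
  · rw [h2]; push_cast; ring
  · have hadj := hc (u := ⟨m, by omega⟩) (v := ⟨m + 1, by omega⟩) (Or.inl rfl)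
    rcases hadj with h | h
    · exact absurd h.symm h2
    · rw [cycleG, SimpleGraph.fromRel_adj] at h
      rcases h.2 with h' | h'
      · exact absurd h' h1
      · rw [h']; push_cast; ring

private lemma claimA {n N : ℕ} {c : Fin (N + 1) → ZMod n}
    (hc : IsGraphMap (pathG N) (cycleG n) c) :
    ∀ m (hm : m ≤ N), c ⟨m, by omega⟩ = c 0 + ((liftW n N c m : ℤ) : ZMod n) := by
  intro m
  induction m with
  | zero =>
    intro hm
    have : (⟨0, by omega⟩ : Fin (N + 1)) = 0 := rfl
    simp [liftW, this]
  | succ m ih =>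
    intro hm
    have hmN : m < N := by omega
    have : liftW n N c (m + 1) = liftW n N c m + stepInc n N c m :=
      Finset.sum_range_succ _ _
    rw [step_rel hc hmN, ih (by omega), this]
    push_cast
    ring

private lemma abs_liftW_le (n N : ℕ) (c : Fin (N + 1) → ZMod n) (m : ℕ) :
    |liftW n N c m| ≤ (m : ℤ) := by
  induction m with
  | zero => simp [liftW]
  | succ m ih =>
    have h1 : liftW n N c (m + 1) = liftW n N c m + stepInc n N c m :=
      Finset.sum_range_succ _ _
    have h2 := abs_add_le (liftW n N c m) (stepInc n N c m)
    have h3 := abs_stepInc n N c m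
    rw [h1]
    push_cast
    omega

private lemma trunc_j_lip (a b x : ℤ) (h : |a - b| ≤ 1) :
    |trunc a x - trunc b x| ≤ 1 := by
  unfold trunc; rw [abs_le] at h ⊢; omega

private lemma trunc_x_lip (a x y : ℤ) (h : |x - y| ≤ 1) :
    |trunc a x - trunc a y| ≤ 1 := by
  unfold trunc; rw [abs_le] at h ⊢; omega

private lemma trunc_zero_left (x : ℤ) : trunc 0 x = x := by unfold trunc; omega

private lemma trunc_zero_right (j : ℤ) (hj : 0 ≤ j) : trunc j 0 = 0 := by
  unfold trunc; omega

private lemma trunc_of_abs_le (j x : ℤ) (h : |x| ≤ j) : trunc j x = 0 := by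
  unfold trunc; rw [abs_le] at h; omega

private lemma adjOrEq {n : ℕ} (hn1 : (1 : ZMod n) ≠ 0) (v : ZMod n) (z w : ℤ)
    (h : |z - w| ≤ 1) :
    v + (z : ZMod n) = v + (w : ZMod n) ∨ (cycleG n).Adj (v + z) (v + w) := by
  have h3 : z = w ∨ z = w + 1 ∨ w = z + 1 := by rw [abs_le] at h; omega
  rcases h3 with h3 | h3 | h3
  · left; rw [h3]
  · right
    rw [cycleG, SimpleGraph.fromRel_adj]
    constructor
    · intro he
      apply hn1
      have hzc : ((z : ℤ) : ZMod n) = (w : ZMod n) + 1 := by rw [h3]; push_cast; ring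
      have := add_left_cancel he
      rw [hzc] at this
      exact (left_eq_add.mp this.symm)
    · right
      rw [h3]; push_cast; ring
  · right
    rw [cycleG, SimpleGraph.fromRel_adj]
    constructor
    · intro he
      apply hn1
      have hwc : ((w : ℤ) : ZMod n) = (z : ZMod n) + 1 := by rw [h3]; push_cast; ring
      have := add_left_cancel he
      rw [hwc] at this
      exact (left_eq_add.mp this)
    · left
      rw [h3]; push_cast; ring

end ShortCycleAux

private lemma padWalk_self {V : Type*} {N : ℕ} (c : Fin (N + 1) → V) (i : Fin (N + 1)) :
    padWalk N c i = c i := by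
  unfold padWalk
  congr 1
  exact Fin.ext (Nat.min_eq_left (Nat.lt_succ_iff.mp i.isLt))

theorem short_cycle_nullhomotopic' (n N : ℕ) (hn : 3 ≤ n)
    (c : Fin (N + 1) → ZMod n) (v : ZMod n)
    (hc : IsGraphMap (pathG N) (cycleG n) c)
    (hbase : c 0 = v) (hclosed : c (Fin.last N) = v)
    (hsteps : (Finset.univ.filter fun i : Fin N => c i.castSucc ≠ c i.succ).card ≤ n - 1) :
    ∃ N', N ≤ N' ∧
      BasedAHomotopic (cycleG n) N' (padWalk N' c) (fun _ : Fin (N' + 1) => v) := by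
  haveI : Fact (1 < n) := ⟨by omega⟩
  have hn1 : (1 : ZMod n) ≠ 0 := one_ne_zero
  have hA : ∀ m (hm : m ≤ N), c ⟨m, by omega⟩ = v + ((liftW n N c m : ℤ) : ZMod n) := by
    intro m hm
    rw [← hbase]
    exact claimA hc m hm
  -- the lift returns to 0
  have hLN : liftW n N c N = 0 := by
    have h2 := hA N le_rfl
    rw [show (⟨N, by omega⟩ : Fin (N + 1)) = Fin.last N from rfl, hclosed] at h2
    have h3 : ((liftW n N c N : ℤ) : ZMod n) = 0 := (left_eq_add.mp h2)
    have hdvd : (n : ℤ) ∣ liftW n N c N := (ZMod.intCast_zmod_eq_zero_iff_dvd _ n).mp h3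
    have h4 : |liftW n N c N| ≤ ∑ j ∈ Finset.range N, |stepInc n N c j| :=
      Finset.abs_sum_le_sum_abs _ _
    have h5 : ∑ i : Fin N, |stepInc n N c i.val| = ∑ j ∈ Finset.range N, |stepInc n N c j| :=
      Fin.sum_univ_eq_sum_range (fun j => |stepInc n N c j|) N
    have h6 : ∑ i ∈ Finset.univ.filter (fun i : Fin N => c i.castSucc ≠ c i.succ),
        |stepInc n N c i.val| = ∑ i : Fin N, |stepInc n N c i.val| := by
      apply Finset.sum_filter_of_ne
      intro i _ hne hpc
      rw [stepInc_eq_zero hn1 i hpc] at hne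
      simp at hne
    have h7 : ∑ i ∈ Finset.univ.filter (fun i : Fin N => c i.castSucc ≠ c i.succ),
        |stepInc n N c i.val| ≤
        ((Finset.univ.filter (fun i : Fin N => c i.castSucc ≠ c i.succ)).card : ℤ) := by
      have := Finset.sum_le_card_nsmul
        (Finset.univ.filter (fun i : Fin N => c i.castSucc ≠ c i.succ))
        (fun i => |stepInc n N c i.val|) 1 (fun i _ => abs_stepInc n N c i.val)
      simpa using this
    have hcard : ((Finset.univ.filter (fun i : Fin N => c i.castSucc ≠ c i.succ)).card : ℤ)
        ≤ (n : ℤ) - 1 := by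
      have := hsteps
      omega
    have habs : |liftW n N c N| < (n : ℤ) := by omega
    exact Int.eq_zero_of_abs_lt_dvd hdvd habs
  have hLdiff : ∀ a : ℕ, |liftW n N c a - liftW n N c (a + 1)| ≤ 1 := by
    intro a
    have h1 : liftW n N c (a + 1) = liftW n N c a + stepInc n N c a :=
      Finset.sum_range_succ _ _
    have h2 := abs_stepInc n N c a
    rw [h1]
    rw [abs_le] at h2 ⊢
    omega
  refine ⟨N, le_rfl, N,
    fun p => v + ((trunc (p.2.val : ℤ) (liftW n N c p.1.val) : ℤ) : ZMod n),
    ?_, ?_, ?_, ?_, ?_⟩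
  · -- graph map
    rintro ⟨i, j⟩ ⟨i', j'⟩ hadj
    rw [SimpleGraph.boxProd_adj] at hadj
    dsimp only at hadj ⊢
    rcases hadj with ⟨hi, hj⟩ | ⟨hj, hi⟩
    · -- i step, j = j'
      subst hj
      apply adjOrEq hn1
      apply trunc_x_lip
      rcases hi with h | h
      · have := hLdiff i.val
        rw [h] at this
        exact this
      · have := hLdiff i'.val
        rw [h] at this
        rw [abs_sub_comm]
        exact this
    · -- j step, i = i'
      subst hi
      apply adjOrEq hn1
      apply trunc_j_lip
      rw [abs_le]
      rcases hj with h | h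
      · have h' : (j : ℕ) + 1 = (j' : ℕ) := h
        omega
      · have h' : (j' : ℕ) + 1 = (j : ℕ) := h
        omega
  · -- α (i, 0) = padWalk N c i
    intro i
    rw [padWalk_self]
    simp only [Fin.val_zero, Nat.cast_zero, trunc_zero_left]
    have hi : (i : ℕ) ≤ N := Nat.lt_succ_iff.mp i.isLt
    have := hA i.val hi
    rw [Fin.eta] at this
    exact this.symm
  · -- α (i, last) = v
    intro i
    simp only [Fin.val_last]
    have h1 : |liftW n N c i.val| ≤ ((N : ℕ) : ℤ) := by
      have h2 := abs_liftW_le n N c i.val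
      have h3 : (i : ℕ) ≤ N := Nat.lt_succ_iff.mp i.isLt
      rw [abs_le] at h2 ⊢
      omega
    rw [trunc_of_abs_le _ _ h1]
    simp
  · -- α (0, j) = padWalk N c 0
    intro j
    rw [padWalk_self, hbase]
    simp only [Fin.val_zero]
    rw [show liftW n N c 0 = 0 from by simp [liftW],
      trunc_zero_right _ (Int.natCast_nonneg _)]
    simp
  · -- α (last, j) = padWalk N c (last)
    intro j
    rw [padWalk_self, hclosed]
    simp only [Fin.val_last]
    rw [hLN, trunc_zero_right _ (Int.natCast_nonneg _)]
    simp

/-- For `n ≥ 3`, every closed walk `c : I_N → C_n` based at `v` with at most `n - 1`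
non-stationary steps is based A-homotopic (after padding to a common length) to the constant walk
at `v`. -/
theorem short_cycle_nullhomotopic (n N : ℕ) (hn : 3 ≤ n)
    (c : Fin (N + 1) → ZMod n) (v : ZMod n)
    (hc : IsGraphMap (pathG N) (cycleG n) c)
    (hbase : c 0 = v) (hclosed : c (Fin.last N) = v)
    (hsteps : (Finset.univ.filter fun i : Fin N => c i.castSucc ≠ c i.succ).card ≤ n - 1) :
    ∃ N', N ≤ N' ∧
      BasedAHomotopic (cycleG n) N' (padWalk N' c) (fun _ : Fin (N' + 1) => v) := by
  exact short_cycle_nullhomotopic' n N hn c v hc hbase hclosed hsteps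
end

section
/- Let n ≥ 5 and let c, c' : I_N → C_n be closed walks in the cycle graph C_n that are based A-homotopic (with c 0 = c' 0 = c N = c' N). Then c and c' have the same winding number. -/
/-- `L : {0, …, N} → ℤ` is a lift of the walk `c : I_N → C_n`: consecutive values differ by
`-1`, `0` or `1`, and `L i ≡ c i (mod n)` for all `i`. -/
def IsLift (n N : ℕ) (c : Fin (N + 1) → ZMod n) (L : Fin (N + 1) → ℤ) : Prop :=
  (∀ i : Fin N,
      L i.succ - L i.castSucc = -1 ∨ L i.succ - L i.castSucc = 0 ∨ L i.succ - L i.castSucc = 1) ∧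
  ∀ i, ((L i : ZMod n)) = c i

/- ### Auxiliary lemmas -/

lemma zmod_int_eq (n : ℕ) (x y : ℤ) (h : (x : ZMod n) = (y : ZMod n))
    (hb : |x - y| < n) : x = y := by
  have hd : (n : ℤ) ∣ y - x := ((ZMod.intCast_eq_intCast_iff x y n).mp h).dvd
  have := Int.eq_zero_of_abs_lt_dvd hd (by rwa [abs_sub_comm] at hb)
  omega

def repZ (n : ℕ) (x : ZMod n) : ℤ := if x = 1 then 1 else if x = -1 then -1 else 0

lemma repZ_cast (n : ℕ) (x : ZMod n) (hx : x = 0 ∨ x = 1 ∨ x = -1) :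
    ((repZ n x : ℤ) : ZMod n) = x := by
  unfold repZ
  split_ifs with h1 h2
  · push_cast; exact h1.symm
  · push_cast; exact h2.symm
  · push_cast
    rcases hx with h | h | h
    · exact h.symm
    · exact absurd h h1
    · exact absurd h h2

def liftF (n : ℕ) (a : ℤ) (g : ℕ → ZMod n) : ℕ → ℤ
  | 0 => a
  | i + 1 => liftF n a g i + repZ n (g (i + 1) - g i)

lemma liftF_step (n : ℕ) (a : ℤ) (g : ℕ → ZMod n) (i : ℕ) :
    liftF n a g (i + 1) - liftF n a g i = -1 ∨ liftF n a g (i + 1) - liftF n a g i = 0 ∨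
      liftF n a g (i + 1) - liftF n a g i = 1 := by
  have h : liftF n a g (i + 1) = liftF n a g i + repZ n (g (i + 1) - g i) := rfl
  rw [h]; unfold repZ; split_ifs <;> omega

lemma liftF_cast (n : ℕ) (a : ℤ) (g : ℕ → ZMod n) (N : ℕ)
    (ha : (a : ZMod n) = g 0)
    (hstep : ∀ i < N, g (i + 1) - g i = 0 ∨ g (i + 1) - g i = 1 ∨ g (i + 1) - g i = -1) :
    ∀ i ≤ N, ((liftF n a g i : ℤ) : ZMod n) = g i := by
  intro i
  induction i with
  | zero => intro _; exact ha
  | succ i ih =>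
    intro hi
    have hi' : i < N := hi
    have h : liftF n a g (i + 1) = liftF n a g i + repZ n (g (i + 1) - g i) := rfl
    rw [h]
    push_cast
    rw [ih hi'.le, repZ_cast n _ (hstep i hi')]
    ring

lemma disp_unique (n : ℕ) (hn : 5 ≤ n) (N : ℕ) (L M : ℕ → ℤ)
    (hL : ∀ i < N, L (i + 1) - L i = -1 ∨ L (i + 1) - L i = 0 ∨ L (i + 1) - L i = 1)
    (hM : ∀ i < N, M (i + 1) - M i = -1 ∨ M (i + 1) - M i = 0 ∨ M (i + 1) - M i = 1)
    (hcong : ∀ i ≤ N, ((L i : ℤ) : ZMod n) = ((M i : ℤ) : ZMod n)) :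
    L N - L 0 = M N - M 0 := by
  have key : ∀ i, i ≤ N → L i - M i = L 0 - M 0 := by
    intro i
    induction i with
    | zero => intro _; ring
    | succ i ih =>
      intro hi
      have hi' : i < N := hi
      have h1 := hL i hi'
      have h2 := hM i hi'
      have hstep : L (i + 1) - L i = M (i + 1) - M i := by
        apply zmod_int_eq n
        · push_cast
          rw [hcong i hi'.le, hcong (i + 1) hi]
        · rw [abs_lt]; omega
      have := ih hi'.le
      omega
  have := key N le_rfl
  omega

lemma close_disp (n : ℕ) (hn : 5 ≤ n) (N : ℕ) (L M : ℕ → ℤ)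
    (hL : ∀ i < N, L (i + 1) - L i = -1 ∨ L (i + 1) - L i = 0 ∨ L (i + 1) - L i = 1)
    (hM : ∀ i < N, M (i + 1) - M i = -1 ∨ M (i + 1) - M i = 0 ∨ M (i + 1) - M i = 1)
    (hclose : ∀ i ≤ N, ((M i : ZMod n) - (L i : ZMod n) = 0 ∨
        (M i : ZMod n) - (L i : ZMod n) = 1 ∨ (M i : ZMod n) - (L i : ZMod n) = -1))
    (h0 : M 0 = L 0)
    (hend : ((M N : ℤ) : ZMod n) = ((L N : ℤ) : ZMod n)) :
    M N = L N := by
  have key : ∀ i, i ≤ N → -1 ≤ M i - L i ∧ M i - L i ≤ 1 := by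
    intro i
    induction i with
    | zero => intro _; omega
    | succ i ih =>
      intro hi
      have hi' : i < N := hi
      have ihb := ih hi'.le
      have h1 := hL i hi'
      have h2 := hM i hi'
      rcases hclose (i + 1) hi with h | h | h
      · have he : M (i + 1) - L (i + 1) = 0 :=
          zmod_int_eq n _ 0 (by push_cast; exact h) (by rw [abs_lt]; omega)
        omega
      · have he : M (i + 1) - L (i + 1) = 1 :=
          zmod_int_eq n _ 1 (by push_cast; exact h) (by rw [abs_lt]; omega)
        omega
      · have he : M (i + 1) - L (i + 1) = -1 :=
          zmod_int_eq n _ (-1) (by push_cast; exact h) (by rw [abs_lt]; omega)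
        omega
  have hb := key N le_rfl
  have := zmod_int_eq n (M N) (L N) hend (by rw [abs_lt]; omega)
  omega

lemma cyc_step {n : ℕ} {a b : ZMod n} (h : a = b ∨ (cycleG n).Adj a b) :
    b - a = 0 ∨ b - a = 1 ∨ b - a = -1 := by
  rcases h with h | h
  · left; rw [h]; ring
  · rw [cycleG, SimpleGraph.fromRel_adj] at h
    rcases h.2 with h' | h'
    · right; left; rw [h']; ring
    · right; right; rw [h']; ring

/-- For `n ≥ 5`, based A-homotopic closed walks `c, c' : I_N → C_n` have the same winding number:
if `L, L'` are integer lifts of `c, c'` and `L N - L 0 = n * w`, `L' N - L' 0 = n * w'`, then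
`w = w'`. -/
theorem based_homotopic_same_winding (n N : ℕ) (hn : 5 ≤ n)
    (c c' : Fin (N + 1) → ZMod n)
    (hc : IsGraphMap (pathG N) (cycleG n) c) (hc' : IsGraphMap (pathG N) (cycleG n) c')
    (h0 : c 0 = c' 0) (hN : c (Fin.last N) = c' (Fin.last N))
    (hclosed : c 0 = c (Fin.last N))
    (hhom : BasedAHomotopic (cycleG n) N c c')
    (L L' : Fin (N + 1) → ℤ) (hL : IsLift n N c L) (hL' : IsLift n N c' L')
    (w w' : ℤ)
    (hw : L (Fin.last N) - L 0 = n * w) (hw' : L' (Fin.last N) - L' 0 = n * w') :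
    w = w' := by
  obtain ⟨k, α, hα, hb0, hbk, hleft, hright⟩ := hhom
  set F : ℕ → Fin (N + 1) := fun i => ⟨min i N, by omega⟩ with hF
  have hF0 : F 0 = 0 := by
    simp [hF, Fin.ext_iff]
  have hFN : F N = Fin.last N := by
    simp [hF, Fin.ext_iff]
  -- path adjacency along rows
  have hpadj : ∀ i, i < N → (pathG N).Adj (F i) (F (i + 1)) := by
    intro i hi
    show ((F i : ℕ) + 1 = (F (i + 1) : ℕ)) ∨ ((F (i + 1) : ℕ) + 1 = (F i : ℕ))
    left
    simp only [hF]
    omega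
  -- steps of each column are 0, ±1
  have hcolstep : ∀ j : Fin (k + 1), ∀ i < N,
      α (F (i + 1), j) - α (F i, j) = 0 ∨ α (F (i + 1), j) - α (F i, j) = 1 ∨
        α (F (i + 1), j) - α (F i, j) = -1 := by
    intro j i hi
    exact cyc_step (hα (SimpleGraph.boxProd_adj.mpr (Or.inl ⟨hpadj i hi, rfl⟩)))
  -- lifts of columns
  set Lc : Fin (k + 1) → ℕ → ℤ :=
    fun j => liftF n (L 0) (fun i => α (F i, j)) with hLc
  have hLc0 : ∀ j, Lc j 0 = L 0 := fun j => rfl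
  have hcast : ∀ j : Fin (k + 1), ∀ i ≤ N, ((Lc j i : ℤ) : ZMod n) = α (F i, j) := by
    intro j i hi
    exact liftF_cast n (L 0) (fun i => α (F i, j)) N
      (by show ((L 0 : ℤ) : ZMod n) = α (F 0, j); rw [hF0, hleft j]; exact hL.2 0)
      (hcolstep j) i hi
  have hLcstep : ∀ (j : Fin (k + 1)) i,
      Lc j (i + 1) - Lc j i = -1 ∨ Lc j (i + 1) - Lc j i = 0 ∨ Lc j (i + 1) - Lc j i = 1 :=
    fun j i => liftF_step n (L 0) (fun i => α (F i, j)) i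
  -- adjacent columns have the same endpoint lift value
  have hcoladj : ∀ m : Fin k, Lc m.succ N = Lc m.castSucc N := by
    intro m
    have hadj : (pathG k).Adj m.castSucc m.succ := Or.inl rfl
    apply close_disp n hn N (Lc m.castSucc) (Lc m.succ)
    · intro i _; exact hLcstep _ i
    · intro i _; exact hLcstep _ i
    · intro i hi
      rw [hcast _ i hi, hcast _ i hi]
      exact cyc_step (hα (SimpleGraph.boxProd_adj.mpr (Or.inr ⟨hadj, rfl⟩)))
    · rfl
    · rw [hcast _ N le_rfl, hcast _ N le_rfl, hFN, hright, hright]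
  -- chain along all columns
  have hchain : ∀ m, (hm : m ≤ k) → Lc ⟨m, Nat.lt_succ_of_le hm⟩ N = Lc 0 N := by
    intro m
    induction m with
    | zero =>
      intro _
      have h00 : (⟨0, Nat.lt_succ_of_le (Nat.zero_le k)⟩ : Fin (k + 1)) = 0 := by
        apply Fin.ext; simp
      rw [h00]
    | succ m ih =>
      intro hm
      have e1 : (⟨m + 1, Nat.lt_succ_of_le hm⟩ : Fin (k + 1)) = Fin.succ ⟨m, hm⟩ := rfl
      rw [e1, hcoladj ⟨m, hm⟩]
      exact ih (Nat.le_of_succ_le hm)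
  have hk : Lc (Fin.last k) N = Lc 0 N := hchain k le_rfl
  -- relate L to the 0-th column lift
  have hLNstep : ∀ i < N, L (F (i + 1)) - L (F i) = -1 ∨ L (F (i + 1)) - L (F i) = 0 ∨
      L (F (i + 1)) - L (F i) = 1 := by
    intro i hi
    have e1 : F i = Fin.castSucc ⟨i, hi⟩ := by
      apply Fin.ext; simp [hF]; omega
    have e2 : F (i + 1) = Fin.succ ⟨i, hi⟩ := by
      apply Fin.ext; simp [hF]; omega
    rw [e1, e2]
    exact hL.1 ⟨i, hi⟩
  have hL'Nstep : ∀ i < N, L' (F (i + 1)) - L' (F i) = -1 ∨ L' (F (i + 1)) - L' (F i) = 0 ∨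
      L' (F (i + 1)) - L' (F i) = 1 := by
    intro i hi
    have e1 : F i = Fin.castSucc ⟨i, hi⟩ := by
      apply Fin.ext; simp [hF]; omega
    have e2 : F (i + 1) = Fin.succ ⟨i, hi⟩ := by
      apply Fin.ext; simp [hF]; omega
    rw [e1, e2]
    exact hL'.1 ⟨i, hi⟩
  have hd1 : L (F N) - L (F 0) = Lc 0 N - Lc 0 0 := by
    apply disp_unique n hn N (fun i => L (F i)) (Lc 0) hLNstep
    · intro i _; exact hLcstep 0 i
    · intro i hi
      rw [hL.2 (F i), hcast 0 i hi, hb0]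
  have hd2 : L' (F N) - L' (F 0) = Lc (Fin.last k) N - Lc (Fin.last k) 0 := by
    apply disp_unique n hn N (fun i => L' (F i)) (Lc (Fin.last k)) hL'Nstep
    · intro i _; exact hLcstep _ i
    · intro i hi
      rw [hL'.2 (F i), hcast _ i hi, hbk]
  rw [hF0, hFN] at hd1 hd2
  rw [hLc0] at hd1 hd2
  have main : L (Fin.last N) - L 0 = L' (Fin.last N) - L' 0 := by
    rw [hd1, hd2, hk]
  rw [hw, hw'] at main
  have hn0 : (n : ℤ) ≠ 0 := by exact_mod_cast (by omega : n ≠ 0)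
  exact mul_left_cancel₀ hn0 main
end

section
/- Let n ≥ 5, let G be a simple graph, let f : G → C_n be a graph map, and let c₁ : I_N → G be a closed walk in G based at a vertex v₁ with at most n − 1 non-stationary steps. Let c₂ : I_N → C_n be (a padding to length N of) a closed walk based at 0 going once around C_n (winding number 1), and let p : I_M → C_n be any walk from f(v₁) to 0. Then there is no graph map α : I_N □ I_M → C_n whose four boundary walks are α(i, 0) = f(c₁(i)), α(i, M) = c₂(i), α(0, j) = p(j), and α(N, j) = p(j). -/
open scoped Classical

namespace NSS

lemma pathG_adj {N : ℕ} {i j : Fin (N + 1)} (h : (i : ℕ) + 1 = (j : ℕ)) :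
    (pathG N).Adj i j := Or.inl h

lemma dvd_eq_zero {n : ℕ} {x : ℤ} (h : (n : ℤ) ∣ x) (hx : x.natAbs < n) : x = 0 := by
  rcases h with ⟨k, rfl⟩
  have h1 := Int.natAbs_mul (n : ℤ) k
  simp only [Int.natAbs_natCast] at h1
  rcases Nat.eq_zero_or_pos k.natAbs with h0 | h0
  · have hz : ((n : ℤ) * k).natAbs = 0 := by rw [h1, h0, mul_zero]
    exact Int.natAbs_eq_zero.mp hz
  · have := Nat.le_mul_of_pos_right n h0
    omega

lemma int_eq_zero {n : ℕ} (x : ℤ) (hx : x.natAbs < n) (h : (x : ZMod n) = 0) : x = 0 :=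
  dvd_eq_zero ((ZMod.intCast_zmod_eq_zero_iff_dvd x n).mp h) hx

noncomputable def stepInt (n : ℕ) (a b : ZMod n) : ℤ :=
  if b = a + 1 then 1 else if b = a - 1 then -1 else 0

lemma stepInt_natAbs {n : ℕ} (a b : ZMod n) : (stepInt n a b).natAbs ≤ 1 := by
  unfold stepInt; split_ifs <;> simp

lemma stepInt_cast {n : ℕ} (hn : 3 ≤ n) {a b : ZMod n}
    (h : a = b ∨ (cycleG n).Adj a b) : ((stepInt n a b : ℤ) : ZMod n) = b - a := by
  unfold stepInt
  split_ifs with h1 h2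
  · subst h1; push_cast; ring
  · subst h2; push_cast; ring
  · rcases h with rfl | h
    · push_cast; ring
    · simp only [cycleG, SimpleGraph.fromRel_adj] at h
      rcases h with ⟨hne, h | h⟩
      · exact absurd h h1
      · exact absurd (by rw [h]; ring) h2

lemma stepInt_self {n : ℕ} (hn : 3 ≤ n) (a : ZMod n) : stepInt n a a = 0 := by
  unfold stepInt
  split_ifs with h1 h2
  · exfalso
    have hc : ((1 : ℤ) : ZMod n) = 0 := by push_cast; linear_combination -h1
    have := int_eq_zero 1 (by omega) hc
    omega
  · exfalso
    have hc : ((-1 : ℤ) : ZMod n) = 0 := by push_cast; linear_combination -h2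
    have := int_eq_zero (-1) (by omega) hc
    omega
  · rfl

noncomputable def liftW (n : ℕ) (C : ℕ → ZMod n) (a : ℤ) : ℕ → ℤ
  | 0 => a
  | i + 1 => liftW n C a i + stepInt n (C i) (C (i + 1))

lemma liftW_zero {n : ℕ} (C : ℕ → ZMod n) (a : ℤ) : liftW n C a 0 = a := rfl

lemma liftW_succ {n : ℕ} (C : ℕ → ZMod n) (a : ℤ) (i : ℕ) :
    liftW n C a (i + 1) = liftW n C a i + stepInt n (C i) (C (i + 1)) := rfl

lemma liftW_cast {n : ℕ} (hn : 3 ≤ n) (C : ℕ → ZMod n) (a : ℤ)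
    (hwalk : ∀ i, C i = C (i + 1) ∨ (cycleG n).Adj (C i) (C (i + 1)))
    (ha : ((a : ℤ) : ZMod n) = C 0) : ∀ i, ((liftW n C a i : ℤ) : ZMod n) = C i := by
  intro i
  induction i with
  | zero => exact ha
  | succ i ih =>
    rw [liftW_succ]
    push_cast
    rw [ih, stepInt_cast hn (hwalk i)]
    ring

lemma lift_unique {n : ℕ} (hn : 3 ≤ n) (C : ℕ → ZMod n) (L L' : ℕ → ℤ)
    (hL : ∀ i, (L (i + 1) - L i).natAbs ≤ 1) (hL' : ∀ i, (L' (i + 1) - L' i).natAbs ≤ 1)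
    (hLc : ∀ i, ((L i : ℤ) : ZMod n) = C i) (hL'c : ∀ i, ((L' i : ℤ) : ZMod n) = C i) :
    ∀ i, L i - L' i = L 0 - L' 0 := by
  intro i
  induction i with
  | zero => rfl
  | succ i ih =>
    have hd : (((L (i+1) - L' (i+1) - (L i - L' i) : ℤ)) : ZMod n) = 0 := by
      push_cast
      rw [hLc, hL'c, hLc, hL'c]; ring
    have h4 : (L (i+1) - L' (i+1) - (L i - L' i)).natAbs < n := by
      have := hL i; have := hL' i; omega
    have := int_eq_zero _ h4 hd
    omega

end NSS



/-- Let `n ≥ 5`, let `f : G → C_n` be a graph map, and let `c₁ : I_N → G` be a closed walk based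
at `v₁` with at most `n - 1` non-stationary steps.  Let `c₂ : I_N → C_n` be a padding to length
`N` of a closed walk based at `0` with winding number `1`, and let `p : I_M → C_n` be a walk from
`f v₁` to `0`.  Then there is no graph map `α : I_N □ I_M → C_n` with boundary walks
`α (i, 0) = f (c₁ i)`, `α (i, M) = c₂ i`, `α (0, j) = p j` and `α (N, j) = p j`. -/
theorem no_stable_square {V : Type*} (n N M : ℕ) (hn : 5 ≤ n)
    (G : SimpleGraph V) (f : V → ZMod n) (hf : IsGraphMap G (cycleG n) f)
    (c₁ : Fin (N + 1) → V) (hc₁ : IsGraphMap (pathG N) G c₁)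
    (v₁ : V) (hc₁0 : c₁ 0 = v₁) (hc₁N : c₁ (Fin.last N) = v₁)
    (hsteps : (Finset.univ.filter fun i : Fin N => c₁ i.castSucc ≠ c₁ i.succ).card ≤ n - 1)
    (c₂ : Fin (N + 1) → ZMod n)
    (N₀ : ℕ) (hN₀ : N₀ ≤ N) (c₀ : Fin (N₀ + 1) → ZMod n)
    (hc₀ : IsGraphMap (pathG N₀) (cycleG n) c₀)
    (hc₀0 : c₀ 0 = 0) (hc₀N : c₀ (Fin.last N₀) = 0)
    (L₀ : Fin (N₀ + 1) → ℤ) (hL₀ : IsLift n N₀ c₀ L₀)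
    (hwind : L₀ (Fin.last N₀) - L₀ 0 = n)
    (hc₂ : c₂ = padWalk N c₀)
    (p : Fin (M + 1) → ZMod n) (hp : IsGraphMap (pathG M) (cycleG n) p)
    (hp0 : p 0 = f v₁) (hpM : p (Fin.last M) = 0) :
    ¬ ∃ α : Fin (N + 1) × Fin (M + 1) → ZMod n,
        IsGraphMap ((pathG N).boxProd (pathG M)) (cycleG n) α ∧
        (∀ i, α (i, 0) = f (c₁ i)) ∧ (∀ i, α (i, Fin.last M) = c₂ i) ∧
        (∀ j, α (0, j) = p j) ∧ (∀ j, α (Fin.last N, j) = p j) := by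
  rintro ⟨α, hα, hb, ht, hl, hr⟩
  have hn3 : 3 ≤ n := by omega
  haveI : NeZero n := ⟨by omega⟩
  -- clamped rows
  set R : ℕ → ℕ → ZMod n :=
    fun j i => α (⟨min i N, by omega⟩, ⟨min j M, by omega⟩) with hRdef
  -- boundary identifications
  have hz : ∀ (K k : ℕ) (h : k < K + 1), k = 0 → (⟨k, h⟩ : Fin (K + 1)) = 0 := by
    intro K k h hk; subst hk; rfl
  have hlast : ∀ (K k : ℕ) (h : k < K + 1), k = K → (⟨k, h⟩ : Fin (K + 1)) = Fin.last K := by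
    intro K k h hk; subst hk; rfl
  set P : ℕ → ZMod n := fun j => p ⟨min j M, by omega⟩ with hPdef
  have hR0 : ∀ j, R j 0 = P j := by
    intro j
    show α (⟨min 0 N, _⟩, ⟨min j M, _⟩) = P j
    rw [hz N (min 0 N) (by omega) (by omega)]
    exact hl _
  have hRN : ∀ j, R j N = P j := by
    intro j
    show α (⟨min N N, _⟩, ⟨min j M, _⟩) = P j
    rw [hlast N (min N N) (by omega) (by omega)]
    exact hr _
  -- vertical adjacency
  have hver : ∀ j i, R j i = R (j + 1) i ∨ (cycleG n).Adj (R j i) (R (j + 1) i) := by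
    intro j i
    by_cases hj : j < M
    · apply hα
      rw [SimpleGraph.boxProd_adj]
      right
      refine ⟨NSS.pathG_adj ?_, rfl⟩
      show min j M + 1 = min (j + 1) M
      omega
    · left
      have hm : min j M = min (j + 1) M := by omega
      simp only [hRdef, hm]
  -- horizontal adjacency
  have hhor : ∀ j i, R j i = R j (i + 1) ∨ (cycleG n).Adj (R j i) (R j (i + 1)) := by
    intro j i
    by_cases hi : i < N
    · apply hα
      rw [SimpleGraph.boxProd_adj]
      left
      refine ⟨NSS.pathG_adj ?_, rfl⟩
      show min i N + 1 = min (i + 1) N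
      omega
    · left
      have hm : min i N = min (i + 1) N := by omega
      simp only [hRdef, hm]
  -- walk property of p (clamped)
  have hPwalk : ∀ j, P j = P (j + 1) ∨ (cycleG n).Adj (P j) (P (j + 1)) := by
    intro j
    by_cases hj : j < M
    · apply hp
      apply NSS.pathG_adj
      show min j M + 1 = min (j + 1) M
      omega
    · left
      have hm : min j M = min (j + 1) M := by omega
      simp only [hPdef, hm]
  -- base lifts along the left edge
  set a₀ : ℤ := ((p 0).val : ℤ) with ha₀def
  have ha₀ : ((a₀ : ℤ) : ZMod n) = P 0 := by
    have : ((p 0).val : ZMod n) = p 0 := ZMod.natCast_zmod_val (p 0)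
    rw [ha₀def]
    push_cast
    rw [this, hPdef]
    congr 1
  set A : ℕ → ℤ := fun j => NSS.liftW n P a₀ j with hAdef
  have hA : ∀ j, ((A j : ℤ) : ZMod n) = P j := NSS.liftW_cast hn3 P a₀ hPwalk ha₀
  -- row lifts
  set L : ℕ → ℕ → ℤ := fun j => NSS.liftW n (R j) (A j) with hLdef
  have hL0 : ∀ j, L j 0 = A j := fun j => rfl
  have hLc : ∀ j i, ((L j i : ℤ) : ZMod n) = R j i := by
    intro j
    exact NSS.liftW_cast hn3 (R j) (A j) (hhor j) (by rw [hA]; exact (hR0 j).symm)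
  have hstep : ∀ j i, (L j (i + 1) - L j i).natAbs ≤ 1 := by
    intro j i
    show (NSS.liftW n (R j) (A j) (i + 1) - NSS.liftW n (R j) (A j) i).natAbs ≤ 1
    rw [NSS.liftW_succ]
    simpa using NSS.stepInt_natAbs (R j i) (R j (i + 1))
  -- vertical difference bound
  have hD : ∀ j i, (L (j + 1) i - L j i).natAbs ≤ 1 := by
    intro j i
    induction i with
    | zero =>
      rw [hL0, hL0]
      show (NSS.liftW n P a₀ (j + 1) - NSS.liftW n P a₀ j).natAbs ≤ 1
      rw [NSS.liftW_succ]
      simpa using NSS.stepInt_natAbs (P j) (P (j + 1))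
    | succ i ih =>
      set D : ℤ := L (j + 1) (i + 1) - L j (i + 1) with hDdef
      set δ : ℤ := NSS.stepInt n (R j (i + 1)) (R (j + 1) (i + 1)) with hδdef
      have hδc : ((δ : ℤ) : ZMod n) = R (j + 1) (i + 1) - R j (i + 1) :=
        NSS.stepInt_cast hn3 (hver j (i + 1))
      have h0 : (((D - δ : ℤ)) : ZMod n) = 0 := by
        push_cast
        rw [hDdef]
        push_cast
        rw [hLc, hLc, hδc]
        ring
      have hδa : δ.natAbs ≤ 1 := NSS.stepInt_natAbs _ _
      have hD3 : D.natAbs ≤ 3 := by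
        have h1 := hstep (j + 1) i
        have h2 := hstep j i
        omega
      have := NSS.int_eq_zero (D - δ) (by omega) h0
      omega
  -- winding numbers: W j := L j N - L j 0 is divisible by n and constant in j
  have hWdvd : ∀ j, (n : ℤ) ∣ (L j N - L j 0) := by
    intro j
    have hc : (((L j N - L j 0 : ℤ)) : ZMod n) = 0 := by
      push_cast
      rw [hLc, hLc, hR0, hRN]
      ring
    exact (ZMod.intCast_zmod_eq_zero_iff_dvd _ n).mp hc
  have hWconst : ∀ j, L j N - L j 0 = L 0 N - L 0 0 := by
    intro j
    induction j with
    | zero => rfl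
    | succ j ih =>
      have d := hD j N
      have d0 := hD j 0
      have hdvd : (n : ℤ) ∣ ((L (j + 1) N - L (j + 1) 0) - (L j N - L j 0)) :=
        dvd_sub (hWdvd _) (hWdvd _)
      have := NSS.dvd_eq_zero hdvd (by omega)
      omega
  -- winding of row 0 is 0
  have hRow0 : ∀ i (hi : i ≤ N), R 0 i = f (c₁ ⟨i, Nat.lt_succ_of_le hi⟩) := by
    intro i hi
    show α (⟨min i N, _⟩, ⟨min 0 M, _⟩) = _
    rw [hz M (min 0 M) (by omega) (by omega)]
    rw [hb]
    have he : (⟨min i N, by omega⟩ : Fin (N + 1)) = ⟨i, Nat.lt_succ_of_le hi⟩ := by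
      simp only [Fin.mk.injEq]
      omega
    rw [he]
  have hbound : ∀ i, i ≤ N → (L 0 i - L 0 0).natAbs ≤
      (Finset.univ.filter fun k : Fin N => (k : ℕ) < i ∧ c₁ k.castSucc ≠ c₁ k.succ).card := by
    intro i
    induction i with
    | zero => simp
    | succ i ih =>
      intro hiN
      have hi : i < N := hiN
      have ihh := ih (by omega)
      have hsub : (Finset.univ.filter fun k : Fin N => (k : ℕ) < i ∧ c₁ k.castSucc ≠ c₁ k.succ) ⊆
          (Finset.univ.filter fun k : Fin N => (k : ℕ) < i + 1 ∧ c₁ k.castSucc ≠ c₁ k.succ) := by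
        apply Finset.monotone_filter_right
        intro a _ h
        exact ⟨Nat.lt_succ_of_lt h.1, h.2⟩
      by_cases hst : c₁ ((⟨i, hi⟩ : Fin N)).castSucc = c₁ ((⟨i, hi⟩ : Fin N)).succ
      · have hre : R 0 i = R 0 (i + 1) := by
          rw [hRow0 i (by omega), hRow0 (i + 1) (by omega)]
          have e1 : ((⟨i, hi⟩ : Fin N)).castSucc = (⟨i, by omega⟩ : Fin (N + 1)) := rfl
          have e2 : ((⟨i, hi⟩ : Fin N)).succ = (⟨i + 1, by omega⟩ : Fin (N + 1)) := rfl
          rw [e1, e2] at hst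
          rw [hst]
        have hLeq : L 0 (i + 1) = L 0 i := by
          show NSS.liftW n (R 0) (A 0) (i + 1) = NSS.liftW n (R 0) (A 0) i
          rw [NSS.liftW_succ, ← hre, NSS.stepInt_self hn3, add_zero]
        calc (L 0 (i + 1) - L 0 0).natAbs = (L 0 i - L 0 0).natAbs := by rw [hLeq]
          _ ≤ _ := ihh
          _ ≤ _ := Finset.card_le_card hsub
      · have hmem : (⟨i, hi⟩ : Fin N) ∉
            (Finset.univ.filter fun k : Fin N => (k : ℕ) < i ∧ c₁ k.castSucc ≠ c₁ k.succ) := by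
          simp
        have hins : insert (⟨i, hi⟩ : Fin N)
            (Finset.univ.filter fun k : Fin N => (k : ℕ) < i ∧ c₁ k.castSucc ≠ c₁ k.succ) ⊆
            (Finset.univ.filter fun k : Fin N => (k : ℕ) < i + 1 ∧ c₁ k.castSucc ≠ c₁ k.succ) := by
          intro a ha
          rcases Finset.mem_insert.mp ha with rfl | ha
          · simp only [Finset.mem_filter, Finset.mem_univ, true_and]
            exact ⟨by omega, hst⟩
          · simp only [Finset.mem_filter, Finset.mem_univ, true_and] at ha ⊢
            exact ⟨by omega, ha.2⟩
        have hcard := Finset.card_le_card hins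
        rw [Finset.card_insert_of_notMem hmem] at hcard
        have := hstep 0 i
        omega
  have hfull : (Finset.univ.filter fun k : Fin N => (k : ℕ) < N ∧ c₁ k.castSucc ≠ c₁ k.succ).card
      ≤ n - 1 := by
    refine le_trans (Finset.card_le_card ?_) hsteps
    apply Finset.monotone_filter_right
    exact fun a _ h => h.2
  have hW0 : L 0 N - L 0 0 = 0 := by
    apply NSS.dvd_eq_zero (hWdvd 0)
    have := hbound N le_rfl
    omega
  -- winding of row M is n
  set L' : ℕ → ℤ := fun i => L₀ ⟨min i N₀, by omega⟩ with hL'def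
  have hRM : ∀ i, R M i = c₀ ⟨min i N₀, by omega⟩ := by
    intro i
    show α (⟨min i N, _⟩, ⟨min M M, _⟩) = _
    rw [hlast M (min M M) (by omega) (by omega)]
    rw [ht, hc₂]
    show c₀ ⟨min (min i N) N₀, _⟩ = c₀ ⟨min i N₀, _⟩
    congr 1
    simp only [Fin.mk.injEq]
    omega
  have hL'c : ∀ i, ((L' i : ℤ) : ZMod n) = R M i := by
    intro i
    show ((L₀ ⟨min i N₀, by omega⟩ : ℤ) : ZMod n) = R M i
    rw [hRM]
    exact hL₀.2 _
  have hL'step : ∀ i, (L' (i + 1) - L' i).natAbs ≤ 1 := by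
    intro i
    by_cases hi : i < N₀
    · have h := hL₀.1 ⟨i, hi⟩
      have e1 : ((⟨i, hi⟩ : Fin N₀)).castSucc = (⟨min i N₀, by omega⟩ : Fin (N₀ + 1)) := by
        simp only [Fin.castSucc_mk, Fin.mk.injEq]
        omega
      have e2 : ((⟨i, hi⟩ : Fin N₀)).succ = (⟨min (i + 1) N₀, by omega⟩ : Fin (N₀ + 1)) := by
        simp only [Fin.succ_mk, Fin.mk.injEq]
        omega
      rw [e1, e2] at h
      simp only [hL'def]
      omega
    · have hm : min i N₀ = min (i + 1) N₀ := by omega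
      simp only [hL'def, hm]
      omega
  have huniq := NSS.lift_unique hn3 (R M) (L M) L' (hstep M) hL'step (hLc M) hL'c N
  have hL'N : L' N - L' 0 = n := by
    simp only [hL'def]
    have e1 : (⟨min N N₀, by omega⟩ : Fin (N₀ + 1)) = Fin.last N₀ := by
      simp only [Fin.last, Fin.mk.injEq]
      omega
    have e2 : (⟨min 0 N₀, by omega⟩ : Fin (N₀ + 1)) = 0 := by
      apply hz
      omega
    rw [e1, e2]
    exact hwind
  have hWM : L M N - L M 0 = n := by omega
  have := hWconst M
  omega
end
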